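/- arXiv:1301.1918 — 5 statements merged into one kernel-verified Lean document; each statement's English description precedes it below -/
import Mathlib

section
/- Let q be a prime power, let m, n, d be positive integers with m ≥ d and n ≥ d, and let C ⊆ F_q^{m×n} be a rank-metric code (a set of m×n matrices over F_q) with minimum rank distance d, i.e., rank(A − B) ≥ d for all distinct A, B ∈ C, and there exist distinct A, B ∈ C with rank(A − B) = d. Then |C| ≤ q^{max(n,m)·(min(n,m) − d + 1)}. -/
open Matrix Module

/-- The row space of a matrix, i.e. the span of its rows. -/
noncomputable def rowSpace (F : Type) [Field F] {k n : ℕ}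
    (M : Matrix (Fin k) (Fin n) F) : Submodule F (Fin n → F) :=
  Submodule.span F (Set.range M)

/-- The block matrix `[0_{k×l} | I_k | M]` of size `k × n`,
where `M` has size `k × (n - k - l)`. -/
def paddedLift (F : Type) [Field F] (k n l : ℕ)
    (M : Matrix (Fin k) (Fin (n - k - l)) F) : Matrix (Fin k) (Fin n) F :=
  fun i j =>
    if (j : ℕ) < l then 0
    else if h : (j : ℕ) < l + k then (if (j : ℕ) = l + (i : ℕ) then 1 else 0)
    else M i ⟨(j : ℕ) - (l + k), by have := j.isLt; omega⟩

/-- A rank-metric code `C` has minimum rank distance `d`. -/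
def HasMinRankDist (F : Type) [Field F] {m n : ℕ}
    (C : Set (Matrix (Fin m) (Fin n) F)) (d : ℕ) : Prop :=
  (∀ A ∈ C, ∀ B ∈ C, A ≠ B → d ≤ (A - B).rank) ∧
  ∃ A ∈ C, ∃ B ∈ C, A ≠ B ∧ (A - B).rank = d

/-- A rank-metric code is MRD if it has minimum rank distance `d` and attains
the Singleton-like bound. -/
def IsMRD (F : Type) [Field F] [Fintype F] {m n : ℕ}
    (C : Set (Matrix (Fin m) (Fin n) F)) (d : ℕ) : Prop :=
  HasMinRankDist F C d ∧
  Nat.card C = (Fintype.card F) ^ (max n m * (min n m - d + 1))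

/-- A constant dimension code `𝒞` of dimension `k` has minimum injection distance `d`. -/
def HasMinInjDist (F : Type) [Field F] {n : ℕ} (k : ℕ)
    (𝒞 : Set (Submodule F (Fin n → F))) (d : ℕ) : Prop :=
  (∀ U ∈ 𝒞, ∀ V ∈ 𝒞, U ≠ V → d ≤ k - finrank F ↥(U ⊓ V)) ∧
  ∃ U ∈ 𝒞, ∃ V ∈ 𝒞, U ≠ V ∧ k - finrank F ↥(U ⊓ V) = d

private lemma rank_le_of_zero_rows (F : Type) [Field F] {m n k : ℕ}
    (M : Matrix (Fin m) (Fin n) F)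
    (hk : k ≤ m) (h0 : ∀ i : Fin m, (i : ℕ) < k → M i = 0) :
    M.rank ≤ m - k := by
  set N : Matrix (Fin (m - k)) (Fin n) F := fun i j => M ⟨k + i, by omega⟩ j with hN
  have hsub : Set.range M ⊆ insert 0 (Set.range N) := by
    rintro _ ⟨i, rfl⟩
    by_cases hi : (i : ℕ) < k
    · exact Set.mem_insert_iff.2 (Or.inl (h0 i hi))
    · refine Set.mem_insert_iff.2 (Or.inr ⟨⟨(i : ℕ) - k, by omega⟩, ?_⟩)
      ext j
      show M ⟨k + ((i : ℕ) - k), by omega⟩ j = M i j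
      congr 1
      ext
      simp only [Fin.val_mk]
      omega
  calc M.rank = finrank F (Submodule.span F (Set.range M)) := M.rank_eq_finrank_span_row
    _ ≤ finrank F (Submodule.span F (Set.range N)) := by
        apply Submodule.finrank_mono
        calc Submodule.span F (Set.range M)
            ≤ Submodule.span F (insert 0 (Set.range N)) := Submodule.span_mono hsub
          _ = Submodule.span F (Set.range N) := Submodule.span_insert_zero
    _ = N.rank := N.rank_eq_finrank_span_row.symm
    _ ≤ m - k := N.rank_le_card_height.trans (by simp)

private lemma key_bound (F : Type) [Field F] [Fintype F] {m n d : ℕ}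
    (hd : 0 < d) (hdm : d ≤ m)
    (C : Set (Matrix (Fin m) (Fin n) F))
    (h : ∀ A ∈ C, ∀ B ∈ C, A ≠ B → d ≤ (A - B).rank) :
    Nat.card C ≤ (Fintype.card F) ^ (n * (m - d + 1)) := by
  set k := m - d + 1 with hkdef
  have hk : k ≤ m := by omega
  set f : C → Matrix (Fin k) (Fin n) F :=
    fun A => fun i j => (A : Matrix (Fin m) (Fin n) F) ⟨i, by omega⟩ j with hf
  have hinj : Function.Injective f := by
    rintro ⟨A, hA⟩ ⟨B, hB⟩ hAB
    by_contra hne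
    have hne' : A ≠ B := fun hh => hne (by simpa using hh)
    have hd' : d ≤ (A - B).rank := h A hA B hB hne'
    have hzero : ∀ i : Fin m, (i : ℕ) < k → (A - B) i = 0 := by
      intro i hi
      ext j
      have := congrFun (congrFun hAB ⟨(i : ℕ), hi⟩) j
      simp only [hf] at this
      simp only [Matrix.sub_apply, Pi.zero_apply]
      have hi' : (⟨(i : ℕ), by omega⟩ : Fin m) = i := rfl
      rw [hi'] at this
      rw [this]
      ring
    have := rank_le_of_zero_rows F (A - B) hk hzero
    omega
  calc Nat.card C ≤ Nat.card (Matrix (Fin k) (Fin n) F) :=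
        Nat.card_le_card_of_injective f hinj
    _ = (Fintype.card F) ^ (n * k) := by
        rw [Nat.card_eq_fintype_card]
        show Fintype.card (Fin k → Fin n → F) = _
        simp [Fintype.card_fun, ← pow_mul, Nat.mul_comm]

/-- **Singleton-like bound for rank-metric codes** (Delsarte/Gabidulin).
If `C ⊆ F_q^{m×n}` has minimum rank distance `d` (with `d ≤ m`, `d ≤ n`), then
`|C| ≤ q^{max(n,m)·(min(n,m) − d + 1)}`. -/
theorem rank_metric_singleton_bound
    (q : ℕ) (F : Type) [Field F] [Fintype F] (hq : Fintype.card F = q)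
    (m n d : ℕ) (hm : 0 < m) (hn : 0 < n) (hd : 0 < d)
    (hdm : d ≤ m) (hdn : d ≤ n)
    (C : Set (Matrix (Fin m) (Fin n) F)) (hC : HasMinRankDist F C d) :
    Nat.card C ≤ q ^ (max n m * (min n m - d + 1)) := by
  subst hq
  rcases le_total m n with hmn | hnm
  · rw [max_eq_left hmn, min_eq_right hmn]
    exact key_bound F hd hdm C hC.1
  · rw [max_eq_right hnm, min_eq_left hnm]
    set Ct : Set (Matrix (Fin n) (Fin m) F) := (·ᵀ) '' C with hCt
    have hcard : Nat.card C = Nat.card Ct := by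
      rw [hCt, Nat.card_image_of_injective]
      exact fun A B h => by simpa using congrArg Matrix.transpose h
    rw [hcard]
    apply key_bound F hd hdn
    rintro _ ⟨A, hA, rfl⟩ _ ⟨B, hB, rfl⟩ hne
    have hne' : A ≠ B := fun hh => hne (by rw [hh])
    have := hC.1 A hA B hB hne'
    rwa [← Matrix.transpose_sub, Matrix.rank_transpose]
end

section
/- Let q be a prime power and let m, n, d be positive integers with m ≥ d and n ≥ d. Then there exists a rank-metric code C ⊆ F_q^{m×n} with minimum rank distance exactly d and cardinality |C| = q^{max(n,m)·(min(n,m) − d + 1)} (i.e., a maximum rank distance (MRD) code exists for every such choice of parameters). -/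
open Matrix Module Polynomial Function

section MRDAux


lemma exists_finext (F : Type) [Field F] [Fintype F] (N : ℕ) (hN : 0 < N) :
    ∃ (K : Type) (_ : Field K) (_ : Fintype K) (_ : Algebra F K),
      Module.finrank F K = N := by
  obtain ⟨p, hp⟩ := CharP.exists F
  haveI := hp
  obtain ⟨r, hpprime, hF⟩ := FiniteField.card F p
  haveI : Fact p.Prime := ⟨hpprime⟩
  have hp1 : 1 < p := hpprime.one_lt
  letI : Algebra (ZMod p) F := ZMod.algebra _ _
  set K := GaloisField p (r * N) with hK
  haveI : Fintype K := Fintype.ofFinite _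
  have hrN : (r : ℕ) * N ≠ 0 := by positivity
  have h1 : (p ^ (r : ℕ) - 1) ∣ (p ^ ((r : ℕ) * N) - 1) := by
    simpa [pow_mul] using Nat.sub_dvd_pow_sub_pow (p ^ (r : ℕ)) 1 N
  have h2 : (X ^ (p ^ (r : ℕ) - 1) - 1 : (ZMod p)[X]) ∣ X ^ (p ^ ((r : ℕ) * N) - 1) - 1 := by
    obtain ⟨s, hs⟩ := h1
    rw [hs, pow_mul]
    simpa using sub_dvd_pow_sub_pow ((X : (ZMod p)[X]) ^ (p ^ (r : ℕ) - 1)) 1 s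
  have hfact : ∀ a : ℕ, 0 < a → (X ^ a - X : (ZMod p)[X]) = X * (X ^ (a - 1) - 1) := by
    intro a ha
    rw [mul_sub, mul_one, ← pow_succ', Nat.sub_add_cancel ha]
  have hdvd : (X ^ p ^ (r : ℕ) - X : (ZMod p)[X]) ∣ (X ^ p ^ ((r : ℕ) * N) - X) := by
    rw [hfact _ (pow_pos hpprime.pos _), hfact _ (pow_pos hpprime.pos _)]
    exact mul_dvd_mul_left _ h2
  have hbigsplits : Splits ((X ^ p ^ ((r : ℕ) * N) - X : (ZMod p)[X]).map (algebraMap (ZMod p) K)) :=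
    SplittingField.splits _
  have hne : (X ^ p ^ ((r : ℕ) * N) - X : (ZMod p)[X]) ≠ 0 :=
    FiniteField.X_pow_card_pow_sub_X_ne_zero _ hrN hp1
  have hsplits : Splits ((X ^ p ^ (r : ℕ) - X : (ZMod p)[X]).map (algebraMap (ZMod p) K)) :=
    hbigsplits.of_dvd (Polynomial.map_ne_zero hne) (Polynomial.map_dvd _ hdvd)
  haveI : IsSplittingField (ZMod p) F (X ^ p ^ (r : ℕ) - X) :=
    FiniteField.isSplittingField_of_card_eq p r hF
  let emb : F →ₐ[ZMod p] K := IsSplittingField.lift F (X ^ p ^ (r : ℕ) - X) hsplits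
  letI : Algebra F K := emb.toRingHom.toAlgebra
  have hcardK : Fintype.card K = p ^ ((r : ℕ) * N) := by
    have := GaloisField.card p ((r : ℕ) * N) hrN
    rwa [Nat.card_eq_fintype_card] at this
  have hc : Fintype.card K = Fintype.card F ^ Module.finrank F K := card_eq_pow_finrank
  rw [hcardK, hF, ← pow_mul] at hc
  have := Nat.pow_right_injective hp1 hc
  have : N = Module.finrank F K := Nat.eq_of_mul_eq_mul_left r.pos this
  exact ⟨K, inferInstance, inferInstance, inferInstance, this.symm⟩


section Core
variable (F : Type) [Field F] [Fintype F]
variable (K : Type) [Field K] [Fintype K] [Algebra F K]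

-- the q-linearized map
noncomputable def qlin (k : ℕ) (a : Fin k → K) : K →ₗ[F] K where
  toFun x := ∑ i, a i * x ^ (Fintype.card F) ^ (i : ℕ)
  map_add' x y := by
    have frob : ∀ (u v : K) (i : ℕ),
        (u + v) ^ (Fintype.card F) ^ i = u ^ (Fintype.card F) ^ i + v ^ (Fintype.card F) ^ i := by
      intro u v i
      obtain ⟨p, hp⟩ := CharP.exists F
      haveI := hp
      haveI : Fact p.Prime := ⟨CharP.char_is_prime F p⟩
      haveI : CharP K p := charP_of_injective_algebraMap (algebraMap F K).injective p
      obtain ⟨r, hpr, hF⟩ := FiniteField.card F p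
      rw [hF, ← pow_mul]
      exact add_pow_char_pow u v p (r*i)
    simp only [frob, mul_add]
    rw [Finset.sum_add_distrib]
  map_smul' c x := by
    simp only [RingHom.id_apply]
    rw [Finset.smul_sum]
    refine Finset.sum_congr rfl fun i _ => ?_
    rw [_root_.smul_pow, FiniteField.pow_card_pow, mul_smul_comm]
end Core

example : True := trivial

section Core2
variable {F : Type} [Field F] [Fintype F]
variable {K : Type} [Field K] [Fintype K] [Algebra F K]

lemma qlin_ker_finrank_le {k : ℕ} (hk : 0 < k) {a : Fin k → K} (ha : a ≠ 0) :
    Module.finrank F ↥(LinearMap.ker (qlin F K k a)) ≤ k - 1 := by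
  classical
  set q := Fintype.card F with hq
  have hq1 : 1 < q := Fintype.one_lt_card
  set P : K[X] := ∑ i : Fin k, C (a i) * X ^ (q ^ (i : ℕ)) with hP
  obtain ⟨i0, hi0⟩ : ∃ i, a i ≠ 0 := by
    by_contra h
    push_neg at h
    exact ha (funext h)
  have hcoeff : P.coeff (q ^ (i0 : ℕ)) = a i0 := by
    rw [hP, Polynomial.finset_sum_coeff]
    rw [Finset.sum_eq_single i0]
    · simp
    · intro i _ hi
      have : q ^ (i0 : ℕ) ≠ q ^ (i : ℕ) := fun h => hi (Fin.ext (Nat.pow_right_injective hq1 h).symm)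
      simp [coeff_C_mul, coeff_X_pow, this]
    · simp
  have hPne : P ≠ 0 := fun h => hi0 (by rw [← hcoeff, h, coeff_zero])
  have hdeg : P.natDegree ≤ q ^ (k - 1) := by
    apply Polynomial.natDegree_sum_le_of_forall_le
    intro i _
    refine (natDegree_C_mul_X_pow_le _ _).trans ?_
    exact Nat.pow_le_pow_right (le_of_lt hq1) (by omega)
  have heval : ∀ x : K, P.eval x = qlin F K k a x := by
    intro x
    simp [hP, qlin, eval_finset_sum, hq]
  -- kernel elements are roots
  have hsub : (LinearMap.ker (qlin F K k a) : Set K).toFinset ⊆ P.roots.toFinset := by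
    intro x hx
    rw [Set.mem_toFinset] at hx
    rw [Multiset.mem_toFinset, mem_roots']
    exact ⟨hPne, by rw [IsRoot, heval]; exact hx⟩
  have hcard : Fintype.card ↥(LinearMap.ker (qlin F K k a)) ≤ q ^ (k - 1) := by
    calc Fintype.card ↥(LinearMap.ker (qlin F K k a))
        = (LinearMap.ker (qlin F K k a) : Set K).toFinset.card := (Set.toFinset_card _).symm
      _ ≤ P.roots.toFinset.card := Finset.card_le_card hsub
      _ ≤ Multiset.card P.roots := Multiset.toFinset_card_le _
      _ ≤ P.natDegree := Polynomial.card_roots' P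
      _ ≤ q ^ (k - 1) := hdeg
  have := (card_eq_pow_finrank (K := F) (V := ↥(LinearMap.ker (qlin F K k a)))).symm.trans_le hcard
  exact (Nat.pow_le_pow_iff_right hq1).mp this

end Core2

section Core3
variable {F : Type} [Field F] [Fintype F]
variable {K : Type} [Field K] [Fintype K] [Algebra F K]

lemma core_exists (F : Type) [Field F] [Fintype F] (N t d : ℕ)
    (hd : 0 < d) (hdt : d ≤ t) (htN : t ≤ N) :
    ∃ C : Set (Matrix (Fin N) (Fin t) F),
      (∀ A ∈ C, ∀ B ∈ C, A ≠ B → d ≤ (A - B).rank) ∧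
      (∃ A ∈ C, ∃ B ∈ C, A ≠ B ∧ (A - B).rank = d) ∧
      Nat.card C = (Fintype.card F) ^ (N * (t - d + 1)) := by
  classical
  set q := Fintype.card F with hq
  have hq1 : 1 < q := Fintype.one_lt_card
  set k := t - d + 1 with hk
  have hk1 : 1 ≤ k := by omega
  have hkt : k ≤ t := by omega
  obtain ⟨K, _, _, _, hKN⟩ := exists_finext F N (by omega)
  have b : Basis (Fin N) F K := Module.finBasisOfFinrankEq F K hKN
  set g : Fin t → K := fun j => b (Fin.castLE htN j) with hg_def
  have hg : LinearIndependent F g :=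
    b.linearIndependent.comp _ (Fin.castLE_injective htN)
  set V : Submodule F K := Submodule.span F (Set.range g) with hV
  have hVrank : Module.finrank F ↥V = t := by
    rw [hV, finrank_span_eq_card hg, Fintype.card_fin]
  set φ : (Fin k → K) → (K →ₗ[F] K) := fun a => qlin F K k a with hφ
  have hφ_apply : ∀ (a : Fin k → K) (x : K), φ a x = ∑ i, a i * x ^ q ^ (i : ℕ) := by
    intro a x; rfl
  have hφ_sub : ∀ (a a' : Fin k → K) (x : K), φ (a - a') x = φ a x - φ a' x := by
    intro a a' x
    simp only [hφ_apply, Pi.sub_apply, sub_mul, Finset.sum_sub_distrib]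
  -- the matrix of a codeword
  set M : (Fin k → K) → Matrix (Fin N) (Fin t) F :=
    fun a => Matrix.of fun i j => b.equivFun (φ a (g j)) i with hM
  have hMsub : ∀ a a', M a - M a' = M (a - a') := by
    intro a a'
    ext i j
    simp only [hM, Matrix.sub_apply, Matrix.of_apply, hφ_sub, map_sub, Pi.sub_apply]
  -- rank of M a
  have hrank : ∀ a : Fin k → K,
      (M a).rank = Module.finrank F ↥(Submodule.map (φ a) V) := by
    intro a
    rw [Matrix.rank_eq_finrank_span_cols]
    have hT : Set.range (M a)ᵀ = ⇑b.equivFun '' Set.range (fun j => φ a (g j)) := by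
      rw [← Set.range_comp]
      rfl
    have h0 : Submodule.map (φ a) V = Submodule.span F (Set.range fun j => φ a (g j)) := by
      rw [hV, Submodule.map_span, ← Set.range_comp]
      rfl
    have h1 : Submodule.span F (Set.range (M a)ᵀ)
        = Submodule.map (b.equivFun : K →ₗ[F] (Fin N → F)) (Submodule.map (φ a) V) := by
      rw [h0, Submodule.map_span, hT]
      rfl
    rw [show Set.range (M a).col = Set.range (M a)ᵀ from rfl, h1]
    exact LinearEquiv.finrank_map_eq _ _
  -- rank-nullity for the restriction
  have hdim : ∀ a : Fin k → K,
      Module.finrank F ↥(Submodule.map (φ a) V)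
        + Module.finrank F ↥(LinearMap.ker (φ a) ⊓ V) = t := by
    intro a
    set ψ : ↥V →ₗ[F] K := (φ a).comp V.subtype with hψ
    have h1 : LinearMap.range ψ = Submodule.map (φ a) V := by
      rw [hψ, LinearMap.range_comp, Submodule.range_subtype]
    have h2 : Module.finrank F ↥(LinearMap.ker ψ)
        = Module.finrank F ↥(LinearMap.ker (φ a) ⊓ V) := by
      have hker : LinearMap.ker ψ = Submodule.comap V.subtype (LinearMap.ker (φ a) ⊓ V) := by
        ext x
        simp [hψ, LinearMap.mem_ker, x.2]
      rw [hker]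
      exact (Submodule.comapSubtypeEquivOfLe inf_le_right).finrank_eq
    have := LinearMap.finrank_range_add_finrank_ker ψ
    rw [h1, h2, hVrank] at this
    exact this
  -- lower bound on rank
  have hbound : ∀ a : Fin k → K, a ≠ 0 → d ≤ (M a).rank := by
    intro a ha
    rw [hrank]
    have h1 : Module.finrank F ↥(LinearMap.ker (φ a) ⊓ V) ≤ k - 1 :=
      le_trans (Submodule.finrank_mono inf_le_left) (qlin_ker_finrank_le (by omega) ha)
    have := hdim a
    omega
  -- injectivity
  have hMinj : Function.Injective M := by
    intro a a' hMeq
    by_contra hne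
    have hsub : a - a' ≠ 0 := sub_ne_zero.mpr hne
    have hgker : ∀ j, φ (a - a') (g j) = 0 := by
      intro j
      have : ∀ i, b.equivFun (φ a (g j)) i = b.equivFun (φ a' (g j)) i := by
        intro i
        exact congrFun (congrFun hMeq i) j
      have heq : φ a (g j) = φ a' (g j) := by
        apply b.equivFun.injective
        ext i
        exact this i
      rw [hφ_sub, heq, sub_self]
    have hle : V ≤ LinearMap.ker (φ (a - a')) := by
      rw [hV, Submodule.span_le]
      rintro x ⟨j, rfl⟩
      exact hgker j
    have := Submodule.finrank_mono (M := K) (R := F) hle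
    rw [hVrank] at this
    have := this.trans (qlin_ker_finrank_le (by omega) hsub)
    omega
  -- the special codeword of rank exactly d
  have hkt' : k - 1 ≤ t := by omega
  obtain ⟨astar, hastar_mem, hastar_ne⟩ :
      ∃ a : Fin k → K, (∀ j : Fin (k-1), φ a (g (Fin.castLE hkt' j)) = 0) ∧ a ≠ 0 := by
    set L : (Fin k → K) →ₗ[K] (Fin (k-1) → K) :=
      { toFun := fun a => fun j => ∑ i, a i * (g (Fin.castLE hkt' j)) ^ q ^ (i : ℕ)
        map_add' := by
          intro a a'
          funext j
          simp [add_mul, Finset.sum_add_distrib]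
        map_smul' := by
          intro c a
          funext j
          simp [Finset.mul_sum, mul_assoc] } with hL
    have hker : LinearMap.ker L ≠ ⊥ := by
      intro hbot
      have h1 := LinearMap.finrank_range_add_finrank_ker L
      rw [hbot, finrank_bot, Nat.add_zero] at h1
      have h2 : Module.finrank K (Fin k → K) ≤ k - 1 := by
        rw [← h1]
        exact (Submodule.finrank_le _).trans (by simp [Module.finrank_pi])
      rw [Module.finrank_pi, Fintype.card_fin] at h2
      omega
    obtain ⟨a, haL, hane⟩ := Submodule.exists_mem_ne_zero_of_ne_bot hker
    refine ⟨a, fun j => ?_, hane⟩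
    have := congrFun ((LinearMap.mem_ker).mp haL) j
    rw [hφ_apply]
    exact this
  have hrank_star : (M astar).rank = d := by
    have hupper : Module.finrank F ↥(LinearMap.ker (φ astar) ⊓ V) ≤ k - 1 :=
      le_trans (Submodule.finrank_mono inf_le_left) (qlin_ker_finrank_le (by omega) hastar_ne)
    have hlower : k - 1 ≤ Module.finrank F ↥(LinearMap.ker (φ astar) ⊓ V) := by
      set g' : Fin (k-1) → K := fun j => g (Fin.castLE hkt' j) with hg'
      have hg'li : LinearIndependent F g' := hg.comp _ (Fin.castLE_injective hkt')
      have hle : Submodule.span F (Set.range g') ≤ LinearMap.ker (φ astar) ⊓ V := by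
        rw [Submodule.span_le]
        rintro x ⟨j, rfl⟩
        refine Submodule.mem_inf.mpr ⟨hastar_mem j, ?_⟩
        exact Submodule.subset_span ⟨Fin.castLE hkt' j, rfl⟩
      have := Submodule.finrank_mono (M := K) (R := F) hle
      rwa [finrank_span_eq_card hg'li, Fintype.card_fin] at this
    have heq : Module.finrank F ↥(LinearMap.ker (φ astar) ⊓ V) = k - 1 := le_antisymm hupper hlower
    rw [hrank]
    have := hdim astar
    omega
  -- assemble
  refine ⟨Set.range M, ?_, ?_, ?_⟩
  · rintro A ⟨a, rfl⟩ B ⟨a', rfl⟩ hAB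
    rw [hMsub]
    exact hbound _ (sub_ne_zero.mpr (fun h => hAB (congrArg M h)))
  · refine ⟨M astar, ⟨astar, rfl⟩, M 0, ⟨0, rfl⟩, fun h => hastar_ne (hMinj h), ?_⟩
    rw [hMsub]
    simpa using hrank_star
  · rw [Nat.card_range_of_injective hMinj]
    have h1 : Nat.card (Fin k → K) = (Nat.card K) ^ k := by
      simp [Nat.card_pi]
    rw [h1, Nat.card_eq_fintype_card, card_eq_pow_finrank (K := F) (V := K), hKN, ← pow_mul]

end Core3
end MRDAux

/-- **Existence of MRD codes** (Gabidulin).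
For every prime power `q` and `m, n ≥ d ≥ 1` there is a rank-metric code
`C ⊆ F_q^{m×n}` with minimum rank distance exactly `d` and cardinality
`q^{max(n,m)·(min(n,m) − d + 1)}`. -/
theorem exists_MRD_code
    (q : ℕ) (F : Type) [Field F] [Fintype F] (hq : Fintype.card F = q)
    (m n d : ℕ) (hm : 0 < m) (hn : 0 < n) (hd : 0 < d)
    (hdm : d ≤ m) (hdn : d ≤ n) :
    ∃ C : Set (Matrix (Fin m) (Fin n) F),
      HasMinRankDist F C d ∧
      Nat.card C = q ^ (max n m * (min n m - d + 1)) := by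
  subst hq
  rcases le_or_gt n m with hnm | hmn
  · obtain ⟨C, h1, h2, h3⟩ := core_exists F m n d hd hdn hnm
    refine ⟨C, ⟨h1, h2⟩, ?_⟩
    rw [h3, max_eq_right hnm, min_eq_left hnm]
  · obtain ⟨C, h1, h2, h3⟩ := core_exists F n m d hd hdm hmn.le
    refine ⟨(·ᵀ) '' C, ⟨?_, ?_⟩, ?_⟩
    · rintro A ⟨A', hA', rfl⟩ B ⟨B', hB', rfl⟩ hAB
      have hne : A' ≠ B' := fun h => hAB (by rw [h])
      have : A'ᵀ - B'ᵀ = (A' - B')ᵀ := by ext i j; simp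
      rw [this, Matrix.rank_transpose]
      exact h1 A' hA' B' hB' hne
    · obtain ⟨A, hA, B, hB, hne, hr⟩ := h2
      refine ⟨Aᵀ, ⟨A, hA, rfl⟩, Bᵀ, ⟨B, hB, rfl⟩, ?_, ?_⟩
      · exact fun h => hne (Matrix.transpose_injective h)
      · have : Aᵀ - Bᵀ = (A - B)ᵀ := by ext i j; simp
        rw [this, Matrix.rank_transpose, hr]
    · rw [Nat.card_coe_set_eq, Set.ncard_image_of_injective _ Matrix.transpose_injective,
        ← Nat.card_coe_set_eq, h3, max_eq_left hmn.le, min_eq_right hmn.le]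
end

section
/- Let q be a prime power, k ≤ n positive integers, and let A, B ∈ F_q^{k×(n−k)}. Let lift(A) denote the row space of the block matrix [I_k | A] in F_q^n, and similarly lift(B). Then lift(A) and lift(B) are k-dimensional subspaces of F_q^n, and the injection distance satisfies d_I(lift(A), lift(B)) = rank(A − B). In particular, the lifting map is injective. -/
open Matrix Module

section Aux

variable {F : Type} [Field F] {k n : ℕ}

lemma vecMul_paddedLift_lt (M : Matrix (Fin k) (Fin (n - k - 0)) F)
    (x : Fin k → F) (j : Fin n) (h : (j : ℕ) < k) :
    (x ᵥ* paddedLift F k n 0 M) j = x ⟨j, h⟩ := by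
  have h' : (j : ℕ) < 0 + k := by omega
  have hentry : ∀ i : Fin k, paddedLift F k n 0 M i j
      = if (⟨(j : ℕ), h⟩ : Fin k) = i then 1 else 0 := by
    intro i
    simp only [paddedLift, Nat.not_lt_zero, if_false, dif_pos h']
    congr 1
    simp only [Fin.ext_iff, eq_iff_iff]
    omega
  simp only [vecMul, dotProduct, hentry, mul_ite, mul_one, mul_zero]
  simp

lemma vecMul_paddedLift_ge (M : Matrix (Fin k) (Fin (n - k - 0)) F)
    (x : Fin k → F) (j : Fin n) (h : k ≤ (j : ℕ)) :
    (x ᵥ* paddedLift F k n 0 M) j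
      = (x ᵥ* M) ⟨(j : ℕ) - k, by have := j.isLt; omega⟩ := by
  have h1 : ¬ (j : ℕ) < 0 := by omega
  have h2 : ¬ (j : ℕ) < 0 + k := by omega
  have hentry : ∀ i : Fin k, paddedLift F k n 0 M i j
      = M i ⟨(j : ℕ) - k, by have := j.isLt; omega⟩ := by
    intro i
    simp only [paddedLift, if_neg h1, dif_neg h2]
    congr 1
    simp only [Fin.ext_iff]
    omega
  simp only [vecMul, dotProduct, hentry]

lemma paddedLift_vecMulLinear_injective (hkn : k ≤ n)
    (M : Matrix (Fin k) (Fin (n - k - 0)) F) :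
    Function.Injective (paddedLift F k n 0 M).vecMulLinear := by
  rw [← LinearMap.ker_eq_bot, Submodule.eq_bot_iff]
  intro x hx
  funext i
  have := congrFun hx ⟨(i : ℕ), lt_of_lt_of_le i.isLt hkn⟩
  rwa [Matrix.vecMulLinear_apply, vecMul_paddedLift_lt M x _ i.isLt, Fin.eta] at this

lemma finrank_rowSpace_paddedLift (hkn : k ≤ n)
    (M : Matrix (Fin k) (Fin (n - k - 0)) F) :
    Module.finrank F ↥(rowSpace F (paddedLift F k n 0 M)) = k := by
  rw [rowSpace, show Set.range (paddedLift F k n 0 M) = Set.range (paddedLift F k n 0 M).row from rfl,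
    ← range_vecMulLinear,
    LinearMap.finrank_range_of_inj (paddedLift_vecMulLinear_injective hkn M)]
  simp

lemma inter_rowSpace_eq (hkn : k ≤ n)
    (A B : Matrix (Fin k) (Fin (n - k - 0)) F) :
    rowSpace F (paddedLift F k n 0 A) ⊓ rowSpace F (paddedLift F k n 0 B)
      = Submodule.map (paddedLift F k n 0 A).vecMulLinear
          (LinearMap.ker (A - B).vecMulLinear) := by
  have key : ∀ x : Fin k → F, x ᵥ* A = x ᵥ* B →
      (paddedLift F k n 0 A).vecMulLinear x = (paddedLift F k n 0 B).vecMulLinear x := by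
    intro x hx
    funext j
    rcases lt_or_ge (j : ℕ) k with h | h
    · rw [Matrix.vecMulLinear_apply, Matrix.vecMulLinear_apply,
        vecMul_paddedLift_lt A x j h, vecMul_paddedLift_lt B x j h]
    · rw [Matrix.vecMulLinear_apply, Matrix.vecMulLinear_apply,
        vecMul_paddedLift_ge A x j h, vecMul_paddedLift_ge B x j h, hx]
  have hA : rowSpace F (paddedLift F k n 0 A)
      = Submodule.span F (Set.range (paddedLift F k n 0 A).row) := rfl
  have hB : rowSpace F (paddedLift F k n 0 B)
      = Submodule.span F (Set.range (paddedLift F k n 0 B).row) := rfl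
  ext v
  simp only [Submodule.mem_inf, hA, hB, ← range_vecMulLinear,
    LinearMap.mem_range, Submodule.mem_map, LinearMap.mem_ker]
  constructor
  · rintro ⟨⟨x, rfl⟩, ⟨y, hy⟩⟩
    have hxy : x = y := by
      funext i
      have := congrFun hy ⟨(i : ℕ), lt_of_lt_of_le i.isLt hkn⟩
      rw [Matrix.vecMulLinear_apply, Matrix.vecMulLinear_apply,
        vecMul_paddedLift_lt B y _ i.isLt, vecMul_paddedLift_lt A x _ i.isLt] at this
      exact this.symm
    subst hxy
    refine ⟨x, ?_, rfl⟩
    rw [Matrix.vecMulLinear_apply, Matrix.vecMul_sub, sub_eq_zero]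
    funext c
    have hc : (k + (c : ℕ)) < n := by have := c.isLt; omega
    have := congrFun hy ⟨k + (c : ℕ), hc⟩
    rw [Matrix.vecMulLinear_apply, Matrix.vecMulLinear_apply,
      vecMul_paddedLift_ge A x _ (by simp), vecMul_paddedLift_ge B x _ (by simp)] at this
    have hcc : (⟨k + (c : ℕ) - k, by omega⟩ : Fin (n - k - 0)) = c := by
      simp only [Fin.ext_iff]; omega
    rw [hcc] at this
    exact this.symm
  · rintro ⟨x, hx, rfl⟩
    rw [Matrix.vecMulLinear_apply, Matrix.vecMul_sub, sub_eq_zero] at hx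
    exact ⟨⟨x, rfl⟩, ⟨x, (key x hx).symm⟩⟩

lemma finrank_range_vecMulLinear {m p : ℕ} (M : Matrix (Fin m) (Fin p) F) :
    Module.finrank F ↥(LinearMap.range M.vecMulLinear) = M.rank := by
  rw [← Matrix.mulVecLin_transpose, ← Matrix.rank, Matrix.rank_transpose]

end Aux


/-- **Lifting and the injection distance.**
For `A, B ∈ F_q^{k×(n−k)}`, the liftings `lift(A) = rowspace [I_k | A]` and
`lift(B)` are `k`-dimensional subspaces of `F_q^n`, and
`d_I(lift(A), lift(B)) = k − dim(lift(A) ∩ lift(B)) = rank(A − B)`.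
In particular, lifting is injective. -/
theorem lift_dim_and_injection_distance
    (q : ℕ) (F : Type) [Field F] [Fintype F] (hq : Fintype.card F = q)
    (k n : ℕ) (hk : 0 < k) (hn : 0 < n) (hkn : k ≤ n)
    (A B : Matrix (Fin k) (Fin (n - k)) F) :
    finrank F ↥(rowSpace F (paddedLift F k n 0 A)) = k ∧
    finrank F ↥(rowSpace F (paddedLift F k n 0 B)) = k ∧
    k - finrank F ↥(rowSpace F (paddedLift F k n 0 A) ⊓ rowSpace F (paddedLift F k n 0 B))
      = (A - B).rank ∧
    (rowSpace F (paddedLift F k n 0 A) = rowSpace F (paddedLift F k n 0 B) → A = B) := by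
  have hrank_le : (A - B).rank ≤ k := Matrix.rank_le_height (A - B)
  have hinter : finrank F ↥(rowSpace F (paddedLift F k n 0 A) ⊓
      rowSpace F (paddedLift F k n 0 B)) = k - (A - B).rank := by
    rw [inter_rowSpace_eq hkn A B,
      ← (Submodule.equivMapOfInjective _ (paddedLift_vecMulLinear_injective hkn A)
        (LinearMap.ker (A - B).vecMulLinear)).finrank_eq]
    have hrn := LinearMap.finrank_range_add_finrank_ker (A - B).vecMulLinear
    rw [finrank_range_vecMulLinear (A - B)] at hrn
    simp only [Module.finrank_pi, Fintype.card_fin] at hrn ⊢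
    omega
  refine ⟨finrank_rowSpace_paddedLift hkn A, finrank_rowSpace_paddedLift hkn B, ?_, ?_⟩
  · rw [hinter]; omega
  · intro heq
    have h1 : finrank F ↥(rowSpace F (paddedLift F k n 0 A) ⊓
        rowSpace F (paddedLift F k n 0 B)) = k := by
      rw [heq, inf_idem, finrank_rowSpace_paddedLift hkn B]
    have hr0 : (A - B).rank = 0 := by omega
    have hrange : LinearMap.range (A - B).mulVecLin = ⊥ :=
      Submodule.finrank_eq_zero.mp hr0
    have hzero : ∀ v, (A - B) *ᵥ v = 0 := by
      intro v
      have : (A - B).mulVecLin v ∈ (⊥ : Submodule F (Fin k → F)) := by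
        rw [← hrange]; exact LinearMap.mem_range_self _ v
      simpa [Matrix.sub_mulVec] using this
    have : A - B = 0 := by
      funext i j
      have := congrFun (hzero (Pi.single j 1)) i
      rwa [Matrix.mulVec_single_one] at this
    exact sub_eq_zero.mp this
end

section
/- Let q be a prime power, let k, n, d be positive integers with d ≤ k and k ≤ n, and let i < i' be nonnegative integers with i'·d + k ≤ n. Let U be the row space of [0_{k×id} | I_k | M] for some matrix M ∈ F_q^{k×(n−k−id)} and let V be the row space of [0_{k×i'd} | I_k | M'] for some matrix M' ∈ F_q^{k×(n−k−i'd)}. Then dim(U ∩ V) ≤ k − d, i.e., the injection distance satisfies d_I(U,V) = k − dim(U ∩ V) ≥ d. -/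
open Matrix Module

-- rows of paddedLift vanish on coordinates < l
lemma paddedLift_zero (F : Type) [Field F] {k n l : ℕ}
    (M : Matrix (Fin k) (Fin (n - k - l)) F)
    (v : Fin n → F) (hv : v ∈ rowSpace F (paddedLift F k n l M))
    (m : Fin n) (hm : (m : ℕ) < l) : v m = 0 := by
  induction hv using Submodule.span_induction with
  | mem x hx =>
    obtain ⟨s, rfl⟩ := hx
    simp [paddedLift, hm]
  | zero => rfl
  | add x y _ _ hx hy => simp [Pi.add_apply, hx, hy]
  | smul a x _ hx => simp [Pi.smul_apply, hx]

lemma paddedLift_repr (F : Type) [Field F] {k n l : ℕ} (hl : l + k ≤ n)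
    (M : Matrix (Fin k) (Fin (n - k - l)) F)
    (v : Fin n → F) (hv : v ∈ rowSpace F (paddedLift F k n l M)) :
    v = ∑ t : Fin k, v ⟨l + t, by omega⟩ • paddedLift F k n l M t := by
  induction hv using Submodule.span_induction with
  | mem x hx =>
    obtain ⟨s, rfl⟩ := hx
    have key : ∀ t : Fin k, paddedLift F k n l M s ⟨l + t, by omega⟩
        = if t = s then 1 else 0 := by
      intro t
      simp only [paddedLift]
      rw [if_neg (by omega), dif_pos (by omega)]
      simp only [Fin.ext_iff]
      congr 1
      simp only [eq_iff_iff]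
      omega
    simp only [key]
    rw [Finset.sum_eq_single s]
    · simp
    · intro b _ hb; simp [hb]
    · intro h; exact absurd (Finset.mem_univ s) h
  | zero => simp
  | add x y hx' hy' hx hy =>
    conv_lhs => rw [hx, hy]
    rw [← Finset.sum_add_distrib]
    congr 1; funext t
    simp [add_smul]
  | smul a x hx' hx =>
    conv_lhs => rw [hx]
    rw [Finset.smul_sum]
    congr 1; funext t
    simp [smul_smul]

/-- **Distance between different components.**
If `U = rowspace [0_{k×id} | I_k | M]` and `V = rowspace [0_{k×i'd} | I_k | M']`
with `i < i'` and `i'd + k ≤ n`, then the identity blocks are shifted by at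
least `d` positions, so `dim(U ∩ V) ≤ k − d`, i.e. `d_I(U,V) ≥ d`. -/
theorem component_injection_distance
    (q : ℕ) (F : Type) [Field F] [Fintype F] (hq : Fintype.card F = q)
    (k n d : ℕ) (hk : 0 < k) (hn : 0 < n) (hd : 0 < d)
    (hdk : d ≤ k) (hkn : k ≤ n)
    (i i' : ℕ) (hii' : i < i') (hi' : i' * d + k ≤ n)
    (M : Matrix (Fin k) (Fin (n - k - i * d)) F)
    (M' : Matrix (Fin k) (Fin (n - k - i' * d)) F) :
    finrank F ↥(rowSpace F (paddedLift F k n (i * d) M) ⊓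
      rowSpace F (paddedLift F k n (i' * d) M')) ≤ k - d := by
  have hll' : i * d + d ≤ i' * d := by
    have : (i + 1) * d ≤ i' * d := Nat.mul_le_mul_right d hii'
    rw [add_mul, one_mul] at this
    omega
  have hlk : i * d + k ≤ n := by omega
  set W := rowSpace F (paddedLift F k n (i * d) M) ⊓ rowSpace F (paddedLift F k n (i' * d) M') with hW
  let π : (Fin n → F) →ₗ[F] (Fin k → F) :=
    LinearMap.funLeft F F (fun t : Fin k => (⟨i * d + t, by omega⟩ : Fin n))
  let f : W →ₗ[F] (Fin k → F) := π.comp W.subtype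
  have hker : LinearMap.ker f = ⊥ := by
    rw [LinearMap.ker_eq_bot']
    rintro ⟨v, hv⟩ hfv
    have hπ : ∀ t : Fin k, v ⟨i * d + t, by omega⟩ = 0 := by
      intro t
      have := congrFun hfv t
      simpa [f, π, LinearMap.funLeft] using this
    have := paddedLift_repr F hlk M v hv.1
    simp only [hπ, zero_smul, Finset.sum_const_zero] at this
    exact Subtype.ext this
  let g : (Fin k → F) →ₗ[F] (Fin d → F) := LinearMap.funLeft F F (Fin.castLE hdk)
  have hrange : LinearMap.range f ≤ LinearMap.ker g := by
    rintro c ⟨⟨v, hv⟩, rfl⟩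
    ext j
    simp only [g, f, π, LinearMap.funLeft_apply, LinearMap.coe_comp, Function.comp_apply,
      Submodule.coe_subtype, Pi.zero_apply]
    exact paddedLift_zero F M' v hv.2 _ (by simp [Fin.castLE]; omega)
  have hgsurj : Function.Surjective g :=
    LinearMap.funLeft_surjective_of_injective F F _ (Fin.castLE_injective hdk)
  have hkerg : finrank F (LinearMap.ker g) = k - d := by
    have h1 := LinearMap.finrank_range_add_finrank_ker g
    rw [LinearMap.range_eq_top.2 hgsurj] at h1
    simp only [finrank_top, Module.finrank_pi, Fintype.card_fin] at h1
    omega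
  have h2 : finrank F W = finrank F (LinearMap.range f) := by
    have := LinearMap.finrank_range_add_finrank_ker f
    rw [hker] at this
    simpa using this.symm
  rw [h2, ← hkerg]
  exact Submodule.finrank_mono hrange
end

section
/- Let q be a prime power and let k, n, d be positive integers with d ≤ k and 2k ≤ n. For each j = 0, …, ⌊(n−k)/d⌋, let C_j ⊆ F_q^{k×(n−k−jd)} be an MRD code with minimum rank distance d when n − jd − k ≥ d, and a single matrix otherwise; let 𝒞_j = { row space of [0_{k×jd} | I_k | M] : M ∈ C_j }, and 𝒞 = ⋃_{j=0}^{⌊(n−k)/d⌋} 𝒞_j. Then the cardinality of 𝒞 equals N = Σ_{i=0}^{⌊(n−2k)/d⌋} q^{(k−d+1)(n−k−di)} + Σ_{i=⌊(n−2k)/d⌋+1}^{⌊(n−k)/d⌋} ⌈q^{k(n−k+1−d(i+1))}⌉, where ⌈q^e⌉ = 1 when the exponent e is nonpositive. -/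
open Matrix Module

variable {F : Type} [Field F]

lemma paddedLift_left {k n l : ℕ} (M : Matrix (Fin k) (Fin (n - k - l)) F)
    (i : Fin k) (j : Fin n) (hj : (j : ℕ) < l) : paddedLift F k n l M i j = 0 := by
  simp [paddedLift, hj]

lemma paddedLift_mid {k n l : ℕ} (M : Matrix (Fin k) (Fin (n - k - l)) F)
    (i s : Fin k) (h : l + (s : ℕ) < n) :
    paddedLift F k n l M i ⟨l + s, h⟩ = if s = i then 1 else 0 := by
  have h1 : ¬ (l + (s:ℕ) < l) := by omega
  have h2 : l + (s:ℕ) < l + k := by omega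
  have h3 : (l + (s:ℕ) = l + (i:ℕ)) ↔ s = i :=
    ⟨fun hh => Fin.ext (by omega), fun hh => by rw [hh]⟩
  simp [paddedLift, h1, h2, h3, Fin.val_inj]

lemma paddedLift_right {k n l : ℕ} (M : Matrix (Fin k) (Fin (n - k - l)) F)
    (i : Fin k) (r : Fin (n - k - l)) (h : l + k + (r : ℕ) < n) :
    paddedLift F k n l M i ⟨l + k + r, h⟩ = M i r := by
  have h1 : ¬ (l + k + (r:ℕ) < l) := by omega
  have h2 : ¬ (l + k + (r:ℕ) < l + k) := by omega
  simp only [paddedLift, if_neg h1, dif_neg h2]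
  congr 1
  exact Fin.ext (by simp)

lemma rowSpace_apply_eq_zero {k n l : ℕ} {M : Matrix (Fin k) (Fin (n - k - l)) F}
    {v : Fin n → F} (hv : v ∈ rowSpace F (paddedLift F k n l M))
    (j : Fin n) (hj : (j : ℕ) < l) : v j = 0 := by
  have : rowSpace F (paddedLift F k n l M) ≤
      LinearMap.ker (LinearMap.proj (R := F) (φ := fun _ : Fin n => F) j) := by
    rw [rowSpace, Submodule.span_le]
    rintro _ ⟨i, rfl⟩
    simp [LinearMap.mem_ker, paddedLift_left M i j hj]
  simpa using this hv

lemma rowSpace_paddedLift_le {k n l : ℕ} (hln : l + k ≤ n)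
    (M M' : Matrix (Fin k) (Fin (n - k - l)) F)
    (h : rowSpace F (paddedLift F k n l M') ≤ rowSpace F (paddedLift F k n l M)) :
    M' = M := by
  ext i r
  have hmem : paddedLift F k n l M' i ∈ rowSpace F (paddedLift F k n l M) :=
    h (Submodule.subset_span ⟨i, rfl⟩)
  rw [rowSpace] at hmem
  obtain ⟨c, hc⟩ := (Submodule.mem_span_range_iff_exists_fun F
    (v := (paddedLift F k n l M : Fin k → Fin n → F))).mp hmem
  have hcs : ∀ s : Fin k, c s = if s = i then 1 else 0 := by
    intro s
    have hsn : l + (s : ℕ) < n := by omega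
    have := congrFun hc ⟨l + s, hsn⟩
    simp only [Finset.sum_apply, Pi.smul_apply, smul_eq_mul, paddedLift_mid] at this
    simpa only [mul_ite, mul_one, mul_zero, Finset.sum_ite_eq, Finset.mem_univ,
      if_true] using this
  have hrn : l + k + (r : ℕ) < n := by have := r.isLt; omega
  have := congrFun hc ⟨l + k + r, hrn⟩
  rw [paddedLift_right M' i r hrn] at this
  rw [Finset.sum_apply] at this
  rw [Finset.sum_congr rfl (fun t _ => by
    rw [Pi.smul_apply, smul_eq_mul, paddedLift_right M t r hrn, hcs t, ite_mul, one_mul,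
      zero_mul])] at this
  simpa only [Finset.sum_ite_eq', Finset.mem_univ, if_true] using this.symm

lemma rowSpace_paddedLift_inj {k n l : ℕ} (hln : l + k ≤ n)
    (M M' : Matrix (Fin k) (Fin (n - k - l)) F)
    (h : rowSpace F (paddedLift F k n l M) = rowSpace F (paddedLift F k n l M')) :
    M = M' :=
  rowSpace_paddedLift_le hln M' M h.le

lemma rowSpace_paddedLift_ne {k n l l' : ℕ} (hk : 0 < k) (hll : l < l') (hln : l < n)
    (M : Matrix (Fin k) (Fin (n - k - l)) F) (M' : Matrix (Fin k) (Fin (n - k - l')) F) :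
    rowSpace F (paddedLift F k n l M) ≠ rowSpace F (paddedLift F k n l' M') := by
  intro h
  have hmem : paddedLift F k n l M ⟨0, hk⟩ ∈ rowSpace F (paddedLift F k n l' M') := by
    rw [← h]; exact Submodule.subset_span ⟨_, rfl⟩
  have h0 := rowSpace_apply_eq_zero hmem ⟨l, hln⟩ hll
  have h1 : paddedLift F k n l M ⟨0, hk⟩ ⟨l, hln⟩ = 1 := by
    have : (⟨l, hln⟩ : Fin n) = ⟨l + (⟨0, hk⟩ : Fin k), by simpa using hln⟩ :=
      Fin.ext (by simp)
    rw [this, paddedLift_mid, if_pos rfl]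
  rw [h0] at h1
  exact zero_ne_one h1


set_option maxHeartbeats 1000000 in
/-- **Cardinality of multi-component lifted MRD codes.**
With `C_j` MRD (resp. a single matrix for the short components) as in the
multi-component construction, the union `𝒞 = ⋃_j 𝒞_j` has cardinality
`N = Σ_{i=0}^{⌊(n−2k)/d⌋} q^{(k−d+1)(n−k−di)}
   + Σ_{i=⌊(n−2k)/d⌋+1}^{⌊(n−k)/d⌋} ⌈q^{k(n−k+1−d(i+1))}⌉`,
where the ceiling of a nonpositive power of `q` equals `1`. -/
theorem multi_component_cardinality
    (q : ℕ) (F : Type) [Field F] [Fintype F] (hq : Fintype.card F = q)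
    (k n d : ℕ) (hk : 0 < k) (hn : 0 < n) (hd : 0 < d)
    (hdk : d ≤ k) (h2k : 2 * k ≤ n)
    (C : ∀ j : ℕ, Set (Matrix (Fin k) (Fin (n - k - j * d)) F))
    (hC : ∀ j ≤ (n - k) / d,
      if d ≤ n - j * d - k then IsMRD F (C j) d else ∃ M, C j = {M}) :
    (Nat.card {U : Submodule F (Fin n → F) | ∃ j ≤ (n - k) / d, ∃ M ∈ C j,
        U = rowSpace F (paddedLift F k n (j * d) M)} : ℤ)
      = (∑ i ∈ Finset.range ((n - 2 * k) / d + 1),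
          (q : ℤ) ^ ((k - d + 1) * (n - k - d * i)))
        + ∑ i ∈ Finset.Icc ((n - 2 * k) / d + 1) ((n - k) / d),
          ⌈(q : ℚ) ^ ((k : ℤ) * ((n : ℤ) - k + 1 - d * (i + 1)))⌉ := by
  classical
  set J := (n - k) / d with hJdef
  set J1 := (n - 2 * k) / d with hJ1def
  have hq2 : 2 ≤ q := hq ▸ Fintype.one_lt_card
  have hJ1J : J1 ≤ J := Nat.div_le_div_right (by omega)
  have hjd : ∀ j, j ≤ J → j * d ≤ n - k := fun j hj => (Nat.le_div_iff_mul_le hd).mp hj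
  -- cardinality of each component code
  have hcard : ∀ j ≤ J, Nat.card (C j) =
      if d ≤ n - j * d - k then
        q ^ (max (n - k - j * d) k * (min (n - k - j * d) k - d + 1)) else 1 := by
    intro j hj
    have h := hC j hj
    by_cases hcase : d ≤ n - j * d - k
    · rw [if_pos hcase] at h ⊢
      rw [h.2, hq]
    · rw [if_neg hcase] at h ⊢
      obtain ⟨M, hM⟩ := h
      rw [hM]
      exact Nat.card_unique
  have hfin : ∀ j, j ≤ J → Finite (C j) := by
    intro j hj
    refine Nat.finite_of_card_ne_zero ?_
    rw [hcard j hj]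
    split
    · positivity
    · exact one_ne_zero
  -- the sigma type parametrizing the union
  haveI : ∀ j : Fin (J + 1), Finite (C (j : ℕ)) :=
    fun j => hfin j (Nat.lt_succ_iff.mp j.isLt)
  letI : ∀ j : Fin (J + 1), Fintype (C (j : ℕ)) := fun j => Fintype.ofFinite _
  set f : ((j : Fin (J + 1)) × ↥(C (j : ℕ))) → Submodule F (Fin n → F) :=
    fun x => rowSpace F (paddedLift F k n ((x.1 : ℕ) * d) (x.2 : Matrix _ _ F)) with hfdef
  have hinj : Function.Injective f := by
    rintro ⟨j, M, hM⟩ ⟨j', M', hM'⟩ hEq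
    simp only [hfdef] at hEq
    rcases lt_trichotomy (j : ℕ) (j' : ℕ) with h1 | h1 | h1
    · exact absurd hEq (rowSpace_paddedLift_ne hk
        ((Nat.mul_lt_mul_right hd).mpr h1)
        (by have := hjd j (Nat.lt_succ_iff.mp j.isLt); omega) _ _)
    · have hjj : j = j' := Fin.ext h1
      subst hjj
      have hMM : M = M' := rowSpace_paddedLift_inj
        (by have := hjd j (Nat.lt_succ_iff.mp j.isLt); omega) _ _ hEq
      exact congrArg (Sigma.mk j) (Subtype.ext hMM)
    · exact absurd hEq.symm (rowSpace_paddedLift_ne hk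
        ((Nat.mul_lt_mul_right hd).mpr h1)
        (by have := hjd j' (Nat.lt_succ_iff.mp j'.isLt); omega) _ _)
  have hrange : Set.range f = {U : Submodule F (Fin n → F) | ∃ j ≤ J, ∃ M ∈ C j,
      U = rowSpace F (paddedLift F k n (j * d) M)} := by
    ext U
    simp only [Set.mem_range, Set.mem_setOf_eq]
    constructor
    · rintro ⟨⟨j, M⟩, rfl⟩
      refine ⟨(j : ℕ), Nat.lt_succ_iff.mp j.isLt, M.1, M.2, ?_⟩
      rfl
    · rintro ⟨j, hj, M, hM, rfl⟩
      refine ⟨⟨⟨j, Nat.lt_succ_of_le hj⟩, ⟨M, hM⟩⟩, ?_⟩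
      rfl
  have hcardS : Nat.card {U : Submodule F (Fin n → F) | ∃ j ≤ J, ∃ M ∈ C j,
      U = rowSpace F (paddedLift F k n (j * d) M)} =
      ∑ j ∈ Finset.range (J + 1), Nat.card (C j) := by
    rw [← hrange, Nat.card_range_of_injective hinj, Nat.card_eq_fintype_card,
      Fintype.card_sigma]
    rw [← Fin.sum_univ_eq_sum_range (fun j => Nat.card (C j)) (J + 1)]
    exact Finset.sum_congr rfl fun j _ => (Nat.card_eq_fintype_card).symm
  rw [hcardS]
  push_cast
  -- split the sum
  rw [Finset.range_eq_Ico,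
    ← Finset.sum_Ico_consecutive (fun j => (Nat.card (C j) : ℤ))
      (Nat.zero_le (J1 + 1)) (by omega : J1 + 1 ≤ J + 1),
    ← Finset.range_eq_Ico, Finset.Ico_add_one_right_eq_Icc]
  congr 1
  · refine Finset.sum_congr rfl fun i hi => ?_
    have hi1 : i ≤ J1 := Nat.lt_succ_iff.mp (Finset.mem_range.mp hi)
    have h1 : i * d ≤ n - 2 * k := (Nat.le_div_iff_mul_le hd).mp hi1
    have h2 : d ≤ n - i * d - k := by omega
    rw [hcard i (le_trans hi1 hJ1J), if_pos h2,
      Nat.max_eq_left (by omega), Nat.min_eq_right (by omega)]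
    have he : (n - k - i * d) * (k - d + 1) = (k - d + 1) * (n - k - d * i) := by
      rw [Nat.mul_comm d i]; exact Nat.mul_comm _ _
    rw [he]
    push_cast
    rfl
  · refine Finset.sum_congr rfl fun i hi => ?_
    obtain ⟨hi1, hi2⟩ := Finset.mem_Icc.mp hi
    have h1 : i * d ≤ n - k := hjd i hi2
    have h2 : n - 2 * k < i * d := (Nat.div_lt_iff_lt_mul hd).mp (by omega)
    have hde : (d : ℤ) * (i + 1) = ((i * d : ℕ) : ℤ) + d := by push_cast; ring
    by_cases hcase : d ≤ n - i * d - k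
    · rw [hcard i hi2, if_pos hcase, Nat.max_eq_right (by omega), Nat.min_eq_left (by omega)]
      have hinner : (n : ℤ) - k + 1 - d * (i + 1) = ((n - k - i * d - d + 1 : ℕ) : ℤ) := by
        rw [hde]; omega
      rw [hinner, ← Nat.cast_mul, zpow_natCast, ← Nat.cast_pow, Int.ceil_natCast]
    · rw [hcard i hi2, if_neg hcase]
      have he : (k : ℤ) * ((n : ℤ) - k + 1 - d * (i + 1)) ≤ 0 := by
        refine mul_nonpos_of_nonneg_of_nonpos (by positivity) ?_
        rw [hde]; omega
      symm
      rw [Int.ceil_eq_iff]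
      constructor
      · push_cast
        simpa using zpow_pos (by positivity : (0 : ℚ) < q) _
      · push_cast
        exact zpow_le_one_of_nonpos₀ (by exact_mod_cast (by omega : 1 ≤ q)) he
end
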